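/- If X and Y are topological spaces such that ONE has a winning strategy in the compact-open game on X and ONE has a winning strategy in the compact-open game on Y, then ONE has a winning strategy in the compact-open game on the product space X × Y. -/

import Mathlib

open Set

/-- `GDom R` is the set of dominating families of the relation `R`:
sets `Z ⊆ B` such that every `a ∈ A` is dominated by some `b ∈ Z`. -/
def GDom {α β : Type*} (R : α → β → Prop) : Set (Set β) :=
  {Z | ∀ a : α, ∃ b ∈ Z, R a b}

/-- A relation is total: every element of the domain is dominated by something. -/
def IsTotalRel {α β : Type*} (R : α → β → Prop) : Prop :=
  ∀ a : α, ∃ b : β, R a b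

/-- The product of two relations. -/
def GProd {α β α' β' : Type*} (R : α → β → Prop) (R' : α' → β' → Prop) :
    α × α' → β × β' → Prop :=
  fun a b => R a.1 b.1 ∧ R' a.2 b.2

/-- The finite history consisting of the first `n` moves of the sequence `b`. -/
def GHist {β : Type*} (b : ℕ → β) (n : ℕ) : List β :=
  List.ofFn fun i : Fin n => b i

/-- ONE has a winning strategy in the game `G(P,Q)`: in inning `n` ONE plays `aₙ ∈ A`,
TWO answers `bₙ` with `R aₙ bₙ`; ONE wins iff `{bₙ : n} ∈ GDom T`. -/
def OneWinsG {α β γ : Type*} (R : α → β → Prop) (T : γ → β → Prop) : Prop :=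
  ∃ σ : List β → α, ∀ b : ℕ → β,
    (∀ n, R (σ (GHist b n)) (b n)) → Set.range b ∈ GDom T

/-- TWO has a winning strategy in the game `G(P,Q)`. -/
def TwoWinsG {α β γ : Type*} (R : α → β → Prop) (T : γ → β → Prop) : Prop :=
  ∃ τ : List α → β, ∀ a : ℕ → α,
    (∀ n, R (a n) (τ (GHist a (n + 1)))) ∧
    Set.range (fun n => τ (GHist a (n + 1))) ∉ GDom T

/-- ONE has a winning strategy in the game `G₁(𝒜,ℬ)`: in inning `n` ONE plays `Aₙ ∈ 𝒜`,
TWO answers `bₙ ∈ Aₙ`; TWO wins iff `{bₙ : n} ∈ ℬ`. -/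
def OneWinsG1 {β : Type*} (𝒜 ℬ : Set (Set β)) : Prop :=
  ∃ σ : List β → Set β, (∀ h, σ h ∈ 𝒜) ∧
    ∀ b : ℕ → β, (∀ n, b n ∈ σ (GHist b n)) → Set.range b ∉ ℬ

/-- TWO has a winning strategy in the game `G₁(𝒜,ℬ)`. -/
def TwoWinsG1 {β : Type*} (𝒜 ℬ : Set (Set β)) : Prop :=
  ∃ τ : List (Set β) → β, ∀ S : ℕ → Set β, (∀ n, S n ∈ 𝒜) →
    (∀ n, τ (GHist S (n + 1)) ∈ S n) ∧
    Set.range (fun n => τ (GHist S (n + 1))) ∈ ℬ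

/-- TWO has a winning strategy in the game `G_fin(𝒜,ℬ)`: in inning `n` ONE plays `Aₙ ∈ 𝒜`,
TWO answers a finite `Fₙ ⊆ Aₙ`; TWO wins iff `⋃ₙ Fₙ ∈ ℬ`. -/
def TwoWinsGfin {β : Type*} (𝒜 ℬ : Set (Set β)) : Prop :=
  ∃ τ : List (Set β) → Set β, ∀ S : ℕ → Set β, (∀ n, S n ∈ 𝒜) →
    (∀ n, τ (GHist S (n + 1)) ⊆ S n ∧ (τ (GHist S (n + 1))).Finite) ∧
    (⋃ n, τ (GHist S (n + 1))) ∈ ℬ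

/-- `(𝒜,ℬ)`-Lindelöf: every member of `𝒜` has a countable subset belonging to `ℬ`. -/
def LindelofFam {β : Type*} (𝒜 ℬ : Set (Set β)) : Prop :=
  ∀ S ∈ 𝒜, ∃ C ⊆ S, C.Countable ∧ C ∈ ℬ

/-- The selection principle `S₁(𝒜,ℬ)`. -/
def SelS1 {β : Type*} (𝒜 ℬ : Set (Set β)) : Prop :=
  ∀ A : ℕ → Set β, (∀ n, A n ∈ 𝒜) →
    ∃ b : ℕ → β, (∀ n, b n ∈ A n) ∧ Set.range b ∈ ℬ

/-- The selection principle `S_fin(𝒜,ℬ)`. -/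
def SelSfin {β : Type*} (𝒜 ℬ : Set (Set β)) : Prop :=
  ∀ A : ℕ → Set β, (∀ n, A n ∈ 𝒜) →
    ∃ F : ℕ → Set β, (∀ n, F n ⊆ A n ∧ (F n).Finite) ∧ (⋃ n, F n) ∈ ℬ

/-- `𝒪_X`: the family of open covers of `X`. -/
def OpenCovers (X : Type*) [TopologicalSpace X] : Set (Set (Set X)) :=
  {𝒰 | (∀ U ∈ 𝒰, IsOpen U) ∧ ⋃₀ 𝒰 = Set.univ}

/-- ONE has a winning strategy in the point-open game on `X`. -/
def OneWinsPointOpen (X : Type*) [TopologicalSpace X] : Prop :=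
  ∃ σ : List (Set X) → X, ∀ U : ℕ → Set X,
    (∀ n, IsOpen (U n) ∧ σ (GHist U n) ∈ U n) → Set.range U ∈ OpenCovers X

/-- TWO has a winning strategy in the point-open game on `X`. -/
def TwoWinsPointOpen (X : Type*) [TopologicalSpace X] : Prop :=
  ∃ τ : List X → Set X, ∀ x : ℕ → X,
    (∀ n, IsOpen (τ (GHist x (n + 1))) ∧ x n ∈ τ (GHist x (n + 1))) ∧
    Set.range (fun n => τ (GHist x (n + 1))) ∉ OpenCovers X

/-- `𝔇_X`: the family of dense subsets of `X`. -/
def DenseSets (X : Type*) [TopologicalSpace X] : Set (Set X) :=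
  {D | Dense D}

/-- ONE has a winning strategy in the point-picking game `G^D_ω(X)` of Berner and Juhász. -/
def OneWinsPointPicking (X : Type*) [TopologicalSpace X] : Prop :=
  ∃ σ : List X → Set X, (∀ h, IsOpen (σ h) ∧ (σ h).Nonempty) ∧
    ∀ x : ℕ → X, (∀ n, x n ∈ σ (GHist x n)) → Dense (Set.range x)

/-- TWO has a winning strategy in the point-picking game `G^D_ω(X)`. -/
def TwoWinsPointPicking (X : Type*) [TopologicalSpace X] : Prop :=
  ∃ τ : List (Set X) → X, ∀ U : ℕ → Set X,
    (∀ n, IsOpen (U n) ∧ (U n).Nonempty) →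
    (∀ n, τ (GHist U (n + 1)) ∈ U n) ∧
    ¬ Dense (Set.range fun n => τ (GHist U (n + 1)))

/-- `𝒟_X`: families of open sets whose union is dense in `X`. -/
def DenseUnionFams (X : Type*) [TopologicalSpace X] : Set (Set (Set X)) :=
  {𝒰 | (∀ U ∈ 𝒰, IsOpen U) ∧ Dense (⋃₀ 𝒰)}

/-- ONE has a winning strategy in Tkachuk's game `θ(X)`. -/
def OneWinsTheta (X : Type*) [TopologicalSpace X] : Prop :=
  ∃ σ : List (Set X) → X, ∀ U : ℕ → Set X,
    (∀ n, IsOpen (U n) ∧ σ (GHist U n) ∈ U n) → Dense (⋃ n, U n)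

/-- TWO has a winning strategy in Tkachuk's game `θ(X)`. -/
def TwoWinsTheta (X : Type*) [TopologicalSpace X] : Prop :=
  ∃ τ : List X → Set X, ∀ x : ℕ → X,
    (∀ n, IsOpen (τ (GHist x (n + 1))) ∧ x n ∈ τ (GHist x (n + 1))) ∧
    ¬ Dense (⋃ n, τ (GHist x (n + 1)))

/-- `Ω_x`: the family of subsets of `X` having `x` in their closure. -/
def OmegaPt {X : Type*} [TopologicalSpace X] (x : X) : Set (Set X) :=
  {A | x ∈ closure A}

/-- ONE has a winning strategy in Gruenhage's game `G^c_{O,P}(X,x)`. -/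
def OneWinsGruenhage {X : Type*} [TopologicalSpace X] (x : X) : Prop :=
  ∃ σ : List X → Set X, (∀ h, IsOpen (σ h) ∧ x ∈ σ h) ∧
    ∀ y : ℕ → X, (∀ n, y n ∈ σ (GHist y n)) → x ∈ closure (Set.range y)

/-- TWO has a winning strategy in Gruenhage's game `G^c_{O,P}(X,x)`. -/
def TwoWinsGruenhage {X : Type*} [TopologicalSpace X] (x : X) : Prop :=
  ∃ τ : List (Set X) → X, ∀ V : ℕ → Set X,
    (∀ n, IsOpen (V n) ∧ x ∈ V n) →
    (∀ n, τ (GHist V (n + 1)) ∈ V n) ∧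
    x ∉ closure (Set.range fun n => τ (GHist V (n + 1)))

/-- ONE has a winning strategy in the compact-open game on `X`. -/
def OneWinsCompactOpen (X : Type*) [TopologicalSpace X] : Prop :=
  ∃ σ : List (Set X) → Set X, (∀ h, IsCompact (σ h)) ∧
    ∀ U : ℕ → Set X, (∀ n, IsOpen (U n) ∧ σ (GHist U n) ⊆ U n) →
      (⋃ n, U n) = Set.univ

/-- `⪯` is downwards `P`-compatible. -/
def DownwardsCompat {α β : Type*} (R : α → β → Prop) (le : β → β → Prop) : Prop :=
  ∀ a b₁ b₂, R a b₁ → R a b₂ → ∃ b, R a b ∧ le b b₁ ∧ le b b₂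

/-- `⪯` is upwards `Q`-compatible. -/
def UpwardsCompat {γ β : Type*} (T : γ → β → Prop) (le : β → β → Prop) : Prop :=
  ∀ c b₁ b₂, T c b₁ → le b₁ b₂ → T c b₂

/-- `⪯` is countably downwards `P`-compatible. -/
def CountablyDownwardsCompat {α β : Type*} (R : α → β → Prop) (le : β → β → Prop) : Prop :=
  ∀ a, ∀ E : Set β, E.Countable → E.Nonempty → (∀ b ∈ E, R a b) →
    ∃ b', R a b' ∧ ∀ b ∈ E, le b' b

/-- A relation is `ℵ₀`-preserving if some partial order on `B` is both upwards
compatible and countably downwards compatible with it. -/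
def Aleph0Preserving {α β : Type*} (R : α → β → Prop) : Prop :=
  ∃ le : β → β → Prop, IsPartialOrder β le ∧
    UpwardsCompat R le ∧ CountablyDownwardsCompat R le

/-- `Dom_γ(T)`: the γ-dominating sequences of the relation `T`. -/
def GDomGamma {γ β : Type*} (T : γ → β → Prop) : Set (ℕ → β) :=
  {z | ∀ c : γ, {n : ℕ | ¬ T c (z n)}.Finite}

/-- ONE has a winning strategy in the game `G_γ(P,Q)`. -/
def OneWinsGgamma {α β γ : Type*} (R : α → β → Prop) (T : γ → β → Prop) : Prop :=
  ∃ σ : List β → α, ∀ b : ℕ → β,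
    (∀ n, R (σ (GHist b n)) (b n)) → b ∈ GDomGamma T

/-- TWO has a winning strategy in the game `G_γ(P,Q)`. -/
def TwoWinsGgamma {α β γ : Type*} (R : α → β → Prop) (T : γ → β → Prop) : Prop :=
  ∃ τ : List α → β, ∀ a : ℕ → α,
    (∀ n, R (a n) (τ (GHist a (n + 1)))) ∧
    (fun n => τ (GHist a (n + 1))) ∉ GDomGamma T

/-- ONE has a winning strategy in the game `G₁(𝒜, Dom_γ(T))`. -/
def OneWinsG1gamma {β γ : Type*} (𝒜 : Set (Set β)) (T : γ → β → Prop) : Prop :=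
  ∃ σ : List β → Set β, (∀ h, σ h ∈ 𝒜) ∧
    ∀ b : ℕ → β, (∀ n, b n ∈ σ (GHist b n)) → b ∉ GDomGamma T

/-- TWO has a winning strategy in the game `G₁(𝒜, Dom_γ(T))`. -/
def TwoWinsG1gamma {β γ : Type*} (𝒜 : Set (Set β)) (T : γ → β → Prop) : Prop :=
  ∃ τ : List (Set β) → β, ∀ S : ℕ → Set β, (∀ n, S n ∈ 𝒜) →
    (∀ n, τ (GHist S (n + 1)) ∈ S n) ∧
    (fun n => τ (GHist S (n + 1))) ∈ GDomGamma T

/-- The `ℵ₀`-modification of a relation: moves become nonempty countable subsets of `B`,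
dominated pointwise. -/
def CountMod {α β : Type*} (R : α → β → Prop) :
    α → {E : Set β // E.Countable ∧ E.Nonempty} → Prop :=
  fun a E => ∀ b ∈ E.1, R a b

section Statement10Aux

open Classical

variable {X Y : Type*} [TopologicalSpace X] [TopologicalSpace Y]

/-- Index set of branches at inning `m`: strictly increasing lists with entries `< m`. -/
def S10Idx (m : ℕ) : Set (List ℕ) := {s | s.Chain' (· < ·) ∧ ∀ x ∈ s, x < m}

lemma S10Idx_finite (m : ℕ) : (S10Idx m).Finite := by
  have hinj : Set.InjOn (fun s : List ℕ => s.toFinset) (S10Idx m) := by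
    intro s hs t ht h
    haveI : IsAntisymm ℕ (· < ·) := ⟨fun a b h1 h2 => absurd h2 (lt_asymm h1)⟩
    have hs' : s.Pairwise (· < ·) := List.isChain_iff_pairwise.mp hs.1
    have ht' : t.Pairwise (· < ·) := List.isChain_iff_pairwise.mp ht.1
    exact List.Perm.eq_of_pairwise' hs' ht'
      (List.perm_of_nodup_nodup_toFinset_eq (hs'.imp ne_of_lt) (ht'.imp ne_of_lt) h)
  have himg : ((fun s : List ℕ => s.toFinset) '' S10Idx m).Finite := by
    apply Set.Finite.subset ((Finset.range m).powerset.finite_toSet)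
    rintro _ ⟨s, hs, rfl⟩
    refine Finset.mem_coe.mpr (Finset.mem_powerset.mpr fun x hx => ?_)
    exact Finset.mem_range.mpr (hs.2 x (List.mem_toFinset.mp hx))
  exact Set.Finite.of_finite_image himg hinj

variable (sX : List (Set X) → Set X) (sY : List (Set Y) → Set Y)

/-- The compact played by the `j`-th X-run at inning `m`, computed from previous data. -/
def S10Cx (prev : ℕ → (ℕ → Set X) × (List ℕ → Set Y)) (m j : ℕ) : Set X :=
  sX (List.ofFn fun i : Fin (m - j) => (prev (j + i)).1 j)

/-- The compact played by the Y-run along branch `s`, computed from previous data. -/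
def S10Dy (prev : ℕ → (ℕ → Set X) × (List ℕ → Set Y)) (s : List ℕ) : Set Y :=
  sY (List.ofFn fun i : Fin s.length => (prev (s.get i)).2 (s.take i))

/-- The tube extracted (by choice) from TWO's move `W0` for pair `(j, s)` at inning `m`. -/
noncomputable def S10tb (prev : ℕ → (ℕ → Set X) × (List ℕ → Set Y)) (W0 : Set (X × Y))
    (m j : ℕ) (s : List ℕ) : Set X × Set Y :=
  if h : ∃ p : Set X × Set Y, IsOpen p.1 ∧ IsOpen p.2 ∧ S10Cx sX prev m j ⊆ p.1 ∧
      S10Dy sY prev s ⊆ p.2 ∧ p.1 ×ˢ p.2 ⊆ W0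
  then h.choose else (Set.univ, Set.univ)

/-- The inning-`m` data: responses fed to each X-run and each Y-branch. -/
noncomputable def S10step (prev : ℕ → (ℕ → Set X) × (List ℕ → Set Y)) (W0 : Set (X × Y))
    (m : ℕ) : (ℕ → Set X) × (List ℕ → Set Y) :=
  (fun j => ⋂ s ∈ S10Idx m, (S10tb sX sY prev W0 m j s).1,
   fun s => ⋂ j ∈ Finset.range (m + 1), (S10tb sX sY prev W0 m j s).2)

variable (U : ℕ → Set (X × Y))

/-- Data of all innings `< m`. -/
noncomputable def S10F : ℕ → ℕ → (ℕ → Set X) × (List ℕ → Set Y)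
  | 0 => fun _ => (fun _ => Set.univ, fun _ => Set.univ)
  | m + 1 => fun i => if i = m then S10step sX sY (S10F m) (U m) m else S10F m i

/-- Open response fed to X-run `j` at inning `m`. -/
noncomputable def S10V (m j : ℕ) : Set X :=
  (S10step sX sY (S10F sX sY U m) (U m) m).1 j

/-- Open response fed to the Y-run of branch `s` at inning `m`. -/
noncomputable def S10W (m : ℕ) (s : List ℕ) : Set Y :=
  (S10step sX sY (S10F sX sY U m) (U m) m).2 s

/-- `k`-th compact of X-run `j`. -/
noncomputable def S10C (j k : ℕ) : Set X :=
  sX (List.ofFn fun i : Fin k => S10V sX sY U (j + i) j)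

/-- Compact of the Y-run along branch `s`. -/
noncomputable def S10D (s : List ℕ) : Set Y :=
  sY (List.ofFn fun i : Fin s.length => S10W sX sY U (s.get i) (s.take i))

/-- ONE's move at inning `m`. -/
noncomputable def S10K (m : ℕ) : Set (X × Y) :=
  ⋃ j ∈ Finset.range (m + 1), ⋃ s ∈ S10Idx m, S10C sX sY U j (m - j) ×ˢ S10D sX sY U s

lemma S10F_lt {m i : ℕ} (h : i < m) :
    S10F sX sY U m i = S10step sX sY (S10F sX sY U i) (U i) i := by
  induction m with
  | zero => omega
  | succ m ih =>
    by_cases hi : i = m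
    · subst hi; simp [S10F]
    · simp only [S10F, if_neg hi]
      exact ih (by omega)

lemma S10Cx_eq {m j : ℕ} (h : j ≤ m) :
    S10Cx sX (S10F sX sY U m) m j = S10C sX sY U j (m - j) := by
  refine congrArg sX (congrArg List.ofFn (funext fun i => ?_))
  have hi : j + (i : ℕ) < m := by have := i.isLt; omega
  rw [S10F_lt sX sY U hi]; rfl

lemma S10Dy_eq {m : ℕ} {s : List ℕ} (h : ∀ x ∈ s, x < m) :
    S10Dy sY (S10F sX sY U m) s = S10D sX sY U s := by
  refine congrArg sY (congrArg List.ofFn (funext fun i => ?_))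
  rw [S10F_lt sX sY U (h _ (show s.get i ∈ s from s.get_mem i))]; rfl

lemma S10tb_open1 (prev) (W0) (m j : ℕ) (s : List ℕ) :
    IsOpen (S10tb sX sY prev W0 m j s).1 := by
  rw [S10tb]; split
  next h => exact h.choose_spec.1
  next => exact isOpen_univ

lemma S10tb_open2 (prev) (W0) (m j : ℕ) (s : List ℕ) :
    IsOpen (S10tb sX sY prev W0 m j s).2 := by
  rw [S10tb]; split
  next h => exact h.choose_spec.2.1
  next => exact isOpen_univ

lemma S10tb_sub1 (prev) (W0) (m j : ℕ) (s : List ℕ) :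
    S10Cx sX prev m j ⊆ (S10tb sX sY prev W0 m j s).1 := by
  rw [S10tb]; split
  next h => exact h.choose_spec.2.2.1
  next => exact Set.subset_univ _

lemma S10tb_sub2 (prev) (W0) (m j : ℕ) (s : List ℕ) :
    S10Dy sY prev s ⊆ (S10tb sX sY prev W0 m j s).2 := by
  rw [S10tb]; split
  next h => exact h.choose_spec.2.2.2.1
  next => exact Set.subset_univ _

lemma S10tb_prod (prev) (W0) (m j : ℕ) (s : List ℕ)
    (h : ∃ p : Set X × Set Y, IsOpen p.1 ∧ IsOpen p.2 ∧ S10Cx sX prev m j ⊆ p.1 ∧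
      S10Dy sY prev s ⊆ p.2 ∧ p.1 ×ˢ p.2 ⊆ W0) :
    (S10tb sX sY prev W0 m j s).1 ×ˢ (S10tb sX sY prev W0 m j s).2 ⊆ W0 := by
  rw [S10tb, dif_pos h]
  exact h.choose_spec.2.2.2.2

lemma S10V_isOpen (m j : ℕ) : IsOpen (S10V sX sY U m j) :=
  (S10Idx_finite m).isOpen_biInter fun s _ => S10tb_open1 sX sY _ _ m j s

lemma S10W_isOpen (m : ℕ) (s : List ℕ) : IsOpen (S10W sX sY U m s) :=
  isOpen_biInter_finset fun j _ => S10tb_open2 sX sY _ _ m j s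

lemma S10C_subset_V {m j : ℕ} (h : j ≤ m) :
    S10C sX sY U j (m - j) ⊆ S10V sX sY U m j := by
  rw [← S10Cx_eq sX sY U h]
  exact Set.subset_iInter₂ fun s _ => S10tb_sub1 sX sY _ _ m j s

lemma S10D_subset_W {m : ℕ} {s : List ℕ} (h : ∀ x ∈ s, x < m) :
    S10D sX sY U s ⊆ S10W sX sY U m s := by
  rw [← S10Dy_eq sX sY U h]
  exact Set.subset_iInter₂ fun j _ => S10tb_sub2 sX sY _ _ m j s

lemma S10VW_subset (hcX : ∀ h, IsCompact (sX h)) (hcY : ∀ h, IsCompact (sY h))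
    {m j : ℕ} {s : List ℕ} (hUo : IsOpen (U m)) (hKU : S10K sX sY U m ⊆ U m)
    (hj : j ≤ m) (hs : s ∈ S10Idx m) :
    S10V sX sY U m j ×ˢ S10W sX sY U m s ⊆ U m := by
  have hCD : S10C sX sY U j (m - j) ×ˢ S10D sX sY U s ⊆ U m := by
    refine subset_trans ?_ hKU
    intro z hz
    exact Set.mem_iUnion₂.mpr ⟨j, Finset.mem_range.mpr (by omega),
      Set.mem_iUnion₂.mpr ⟨s, hs, hz⟩⟩
  obtain ⟨u, v, huo, hvo, hCu, hDv, huv⟩ :=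
    generalized_tube_lemma (hcX _) (hcY _) hUo hCD
  have hex : ∃ p : Set X × Set Y, IsOpen p.1 ∧ IsOpen p.2 ∧
      S10Cx sX (S10F sX sY U m) m j ⊆ p.1 ∧ S10Dy sY (S10F sX sY U m) s ⊆ p.2 ∧
      p.1 ×ˢ p.2 ⊆ U m := by
    refine ⟨(u, v), huo, hvo, ?_, ?_, huv⟩
    · rw [S10Cx_eq sX sY U hj]; exact hCu
    · rw [S10Dy_eq sX sY U hs.2]; exact hDv
  intro z hz
  refine S10tb_prod sX sY (S10F sX sY U m) (U m) m j s hex ⟨?_, ?_⟩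
  · exact Set.iInter₂_subset s hs hz.1
  · exact Set.iInter₂_subset j (Finset.mem_range.mpr (by omega)) hz.2

lemma S10F_congr {U U' : ℕ → Set (X × Y)} {m : ℕ} (h : ∀ k < m, U k = U' k) :
    S10F sX sY U m = S10F sX sY U' m := by
  induction m with
  | zero => rfl
  | succ m ih =>
    have h1 : S10F sX sY U m = S10F sX sY U' m := ih fun k hk => h k (by omega)
    funext i
    simp only [S10F]
    rw [h1, h m (Nat.lt_succ_self m)]

lemma S10V_congr {U U' : ℕ → Set (X × Y)} {m : ℕ} (h : ∀ k ≤ m, U k = U' k) :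
    S10V sX sY U m = S10V sX sY U' m := by
  unfold S10V
  rw [S10F_congr sX sY fun k hk => h k (le_of_lt hk), h m le_rfl]

lemma S10W_congr {U U' : ℕ → Set (X × Y)} {m : ℕ} (h : ∀ k ≤ m, U k = U' k) :
    S10W sX sY U m = S10W sX sY U' m := by
  unfold S10W
  rw [S10F_congr sX sY fun k hk => h k (le_of_lt hk), h m le_rfl]

lemma S10C_congr {U U' : ℕ → Set (X × Y)} {j k : ℕ} (h : ∀ i < j + k, U i = U' i) :
    S10C sX sY U j k = S10C sX sY U' j k := by
  refine congrArg sX (congrArg List.ofFn (funext fun i => ?_))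
  rw [S10V_congr sX sY fun l hl => h l (by have := i.isLt; omega)]

lemma S10D_congr {U U' : ℕ → Set (X × Y)} {m : ℕ} {s : List ℕ}
    (hsm : ∀ x ∈ s, x < m) (h : ∀ i < m, U i = U' i) :
    S10D sX sY U s = S10D sX sY U' s := by
  refine congrArg sY (congrArg List.ofFn (funext fun i => ?_))
  rw [S10W_congr sX sY fun l hl => h l (by
    have := hsm _ (show s.get i ∈ s from s.get_mem i); omega)]

lemma S10K_congr {U U' : ℕ → Set (X × Y)} {m : ℕ} (h : ∀ k < m, U k = U' k) :
    S10K sX sY U m = S10K sX sY U' m := by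
  unfold S10K
  refine Set.iUnion₂_congr fun j hj => Set.iUnion₂_congr fun s hs => ?_
  have hjm : j < m + 1 := Finset.mem_range.mp hj
  rw [S10C_congr sX sY fun i hi => h i (by omega), S10D_congr sX sY hs.2 h]

end Statement10Aux

/-- If ONE has a winning strategy in the compact-open game on `X` and
on `Y`, then ONE has a winning strategy in the compact-open game on `X × Y`. -/
theorem statement10 {X Y : Type*} [TopologicalSpace X] [TopologicalSpace Y]
    (hX : OneWinsCompactOpen X) (hY : OneWinsCompactOpen Y) :
    OneWinsCompactOpen (X × Y) := by
  obtain ⟨sX, hcX, hwX⟩ := hX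
  obtain ⟨sY, hcY, hwY⟩ := hY
  refine ⟨fun hs => S10K sX sY (fun i => hs.getD i ∅) hs.length, ?_, ?_⟩
  · intro hs
    refine Set.Finite.isCompact_biUnion ((Finset.range _).finite_toSet) fun j _ => ?_
    refine Set.Finite.isCompact_biUnion (S10Idx_finite _) fun s _ => ?_
    exact (hcX _).prod (hcY _)
  · intro U hU
    have hKU : ∀ m, IsOpen (U m) ∧ S10K sX sY U m ⊆ U m := by
      intro m
      have h2 : S10K sX sY (fun i => (GHist U m).getD i ∅) (GHist U m).length ⊆ U m :=
        (hU m).2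
      have hl : (GHist U m).length = m := by simp [GHist]
      rw [hl] at h2
      have he : S10K sX sY (fun i => (GHist U m).getD i ∅) m = S10K sX sY U m := by
        refine S10K_congr sX sY fun k hk => ?_
        have hk' : k < (GHist U m).length := by rw [hl]; exact hk
        rw [List.getD_eq_getElem _ _ hk']
        simp [GHist]
      rw [he] at h2
      exact ⟨(hU m).1, h2⟩
    have hXcov : ∀ j : ℕ, (⋃ k, S10V sX sY U (j + k) j) = Set.univ := by
      intro j
      refine hwX (fun k => S10V sX sY U (j + k) j) fun k => ⟨S10V_isOpen sX sY U _ _, ?_⟩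
      have hrfl : sX (GHist (fun k => S10V sX sY U (j + k) j) k) = S10C sX sY U j k := rfl
      rw [hrfl]
      have h2 := S10C_subset_V sX sY U (Nat.le_add_right j k)
      rwa [Nat.add_sub_cancel_left] at h2
    rw [Set.eq_univ_iff_forall]
    rintro ⟨x, y⟩
    have hE : ∀ N, ∃ m, N ≤ m ∧ ∃ j, j ≤ m ∧ x ∈ S10V sX sY U m j := by
      intro N
      have hx : x ∈ ⋃ k, S10V sX sY U (N + k) N := (hXcov N) ▸ Set.mem_univ x
      obtain ⟨k, hk⟩ := Set.mem_iUnion.mp hx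
      exact ⟨N + k, Nat.le_add_right _ _, N, Nat.le_add_right _ _, hk⟩
    set β : ℕ → ℕ := fun n => Nat.rec (hE 0).choose (fun _ p => (hE (p + 1)).choose) n with hβ
    have hβsucc : ∀ n, β (n + 1) = (hE (β n + 1)).choose := fun n => rfl
    have hβmono : StrictMono β := by
      refine strictMono_nat_of_lt_succ fun n => ?_
      have := (hE (β n + 1)).choose_spec.1
      rw [hβsucc n]; omega
    have hβmem : ∀ n, ∃ j, j ≤ β n ∧ x ∈ S10V sX sY U (β n) j := by
      intro n
      cases n with
      | zero => exact (hE 0).choose_spec.2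
      | succ n => rw [hβsucc n]; exact (hE (β n + 1)).choose_spec.2
    set L : ℕ → List ℕ := fun k => List.ofFn fun i : Fin k => β i with hL
    have hLlt : ∀ k, ∀ z ∈ L k, z < β k := by
      intro k z hz
      rw [hL, List.mem_ofFn] at hz
      obtain ⟨i, rfl⟩ := hz
      exact hβmono i.isLt
    have hLIdx : ∀ k, L k ∈ S10Idx (β k) := by
      intro k
      refine ⟨List.isChain_iff_pairwise.mpr (List.pairwise_ofFn.mpr fun i j hij => ?_), hLlt k⟩
      exact hβmono hij
    have hLget : ∀ k (i : Fin (L k).length), (L k).get i = β i := by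
      intro k i
      simp [hL, List.get_ofFn]
    have hLtake : ∀ k i, i ≤ k → (L k).take i = L i := by
      intro k i hik
      apply List.ext_getElem
      · simp [hL]; omega
      · intro n h1 h2
        simp [hL]
    have hYcov : (⋃ k, S10W sX sY U (β k) (L k)) = Set.univ := by
      refine hwY (fun k => S10W sX sY U (β k) (L k)) fun k =>
        ⟨S10W_isOpen sX sY U _ _, ?_⟩
      have hlen : (L k).length = k := by simp [hL]
      have hlist : GHist (fun k => S10W sX sY U (β k) (L k)) k
          = List.ofFn fun i : Fin (L k).length => S10W sX sY U ((L k).get i) ((L k).take i) := by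
        apply List.ext_getElem
        · simp [GHist, hlen]
        · intro n h1 h2
          have hn : n < k := by simpa [GHist] using h1
          simp only [GHist, List.getElem_ofFn]
          rw [hLget, hLtake k n (le_of_lt hn)]
      have hrfl : sY (GHist (fun k => S10W sX sY U (β k) (L k)) k) = S10D sX sY U (L k) := by
        rw [hlist]; rfl
      rw [hrfl]
      exact S10D_subset_W sX sY U (hLlt k)
    obtain ⟨k, hk⟩ := Set.mem_iUnion.mp ((hYcov) ▸ Set.mem_univ y)
    obtain ⟨j, hj, hx⟩ := hβmem k
    exact Set.mem_iUnion.mpr ⟨β k,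
      S10VW_subset sX sY U hcX hcY (hKU (β k)).1 (hKU (β k)).2 hj (hLIdx k) ⟨hx, hk⟩⟩
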